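/- Let s ≥ 1/2, M > 0, λ > 0, and integers j_0 ≤ j* ≤ J. Let (β_{j,k})_{j_0 ≤ j ≤ J, 0 ≤ k < 2^j} be real numbers with |β_{j,k}| ≤ M·2^{−j(s + 1/2)} for all j, k in this range. Then Σ_{j = j_0}^{J} Σ_{0 ≤ k < 2^j} β_{j,k}²·1{|β_{j,k}| < 2λ} ≤ 8·2^{j*}·λ² + 2·M²·2^{−2 j* s}. -/
import Mathlib


open scoped BigOperators

/-- **Small-coefficients bound (term SS).**
If `|β_{j,k}| ≤ M·2^{−j(s+1/2)}` for `j₀ ≤ j ≤ J`, `0 ≤ k < 2^j`, with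
`s ≥ 1/2`, then for every `λ > 0` and `j₀ ≤ j* ≤ J`,
`∑_{j=j₀}^J ∑_{k<2^j} β_{j,k}²·1{|β_{j,k}| < 2λ} ≤ 8·2^{j*}·λ² + 2·M²·2^{−2j*s}`. -/
theorem small_coefficients_bound (s M lam : ℝ) (hs : 1 / 2 ≤ s) (hM : 0 < M)
    (hlam : 0 < lam) (j₀ js J : ℕ) (hj₀ : j₀ ≤ js) (hjs : js ≤ J)
    (β : ℕ → ℕ → ℝ)
    (hβ : ∀ j, j₀ ≤ j → j ≤ J → ∀ k < 2 ^ j,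
      |β j k| ≤ M * (2 : ℝ) ^ (-(j : ℝ) * (s + 1 / 2))) :
    ∑ j ∈ Finset.Icc j₀ J, ∑ k ∈ Finset.range (2 ^ j),
        β j k ^ 2 * (if |β j k| < 2 * lam then 1 else 0) ≤
      8 * (2 : ℝ) ^ (js : ℕ) * lam ^ 2 + 2 * M ^ 2 * (2 : ℝ) ^ (-(2 : ℝ) * (js : ℝ) * s) := by
  set r : ℝ := (2 : ℝ) ^ (-(2 : ℝ) * s) with hr_def
  have hr0 : 0 < r := Real.rpow_pos_of_pos two_pos _
  have hr_half : r ≤ 1 / 2 := by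
    have h1 : -(2 : ℝ) * s ≤ -1 := by linarith
    calc r ≤ (2 : ℝ) ^ (-1 : ℝ) :=
          Real.rpow_le_rpow_of_exponent_le one_le_two h1
      _ = 1 / 2 := by
          rw [Real.rpow_neg_one]; norm_num
  have hr1 : r < 1 := lt_of_le_of_lt hr_half (by norm_num)
  -- split the sum
  have hsplit : Finset.Icc j₀ J = Finset.Icc j₀ js ∪ Finset.Ioc js J := by
    ext a
    simp only [Finset.mem_Icc, Finset.mem_Ioc, Finset.mem_union]
    omega
  have hdisj : Disjoint (Finset.Icc j₀ js) (Finset.Ioc js J) := by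
    rw [Finset.disjoint_left]
    intro a ha hb
    simp only [Finset.mem_Icc] at ha
    simp only [Finset.mem_Ioc] at hb
    omega
  rw [hsplit, Finset.sum_union hdisj]
  -- Part 1
  have h1 : ∑ j ∈ Finset.Icc j₀ js, ∑ k ∈ Finset.range (2 ^ j),
      β j k ^ 2 * (if |β j k| < 2 * lam then 1 else 0) ≤
      8 * (2 : ℝ) ^ (js : ℕ) * lam ^ 2 := by
    have hstep : ∀ j ∈ Finset.Icc j₀ js, ∑ k ∈ Finset.range (2 ^ j),
        β j k ^ 2 * (if |β j k| < 2 * lam then 1 else 0) ≤ (2 : ℝ) ^ j * (4 * lam ^ 2) := by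
      intro j _
      calc ∑ k ∈ Finset.range (2 ^ j), β j k ^ 2 * (if |β j k| < 2 * lam then 1 else 0)
          ≤ ∑ k ∈ Finset.range (2 ^ j), (4 * lam ^ 2) := by
            apply Finset.sum_le_sum
            intro k _
            by_cases h : |β j k| < 2 * lam
            · simp only [h, if_pos, mul_one]
              nlinarith [sq_abs (β j k), abs_nonneg (β j k)]
            · simp only [h, if_neg, not_false_iff, mul_zero]
              positivity
        _ = (2 : ℝ) ^ j * (4 * lam ^ 2) := by
            rw [Finset.sum_const, Finset.card_range, nsmul_eq_mul]
            push_cast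
            ring
    calc ∑ j ∈ Finset.Icc j₀ js, ∑ k ∈ Finset.range (2 ^ j),
          β j k ^ 2 * (if |β j k| < 2 * lam then 1 else 0)
        ≤ ∑ j ∈ Finset.Icc j₀ js, (2 : ℝ) ^ j * (4 * lam ^ 2) :=
          Finset.sum_le_sum hstep
      _ ≤ ∑ j ∈ Finset.range (js + 1), (2 : ℝ) ^ j * (4 * lam ^ 2) := by
          apply Finset.sum_le_sum_of_subset_of_nonneg
          · intro a ha
            simp only [Finset.mem_Icc] at ha
            simp only [Finset.mem_range]
            omega
          · intro i _ _
            positivity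
      _ = (∑ j ∈ Finset.range (js + 1), (2 : ℝ) ^ j) * (4 * lam ^ 2) := by
          rw [Finset.sum_mul]
      _ ≤ (2 * (2 : ℝ) ^ js) * (4 * lam ^ 2) := by
          have hg : ∑ j ∈ Finset.range (js + 1), (2 : ℝ) ^ j = 2 ^ (js + 1) - 1 := by
            rw [geom_sum_eq (by norm_num : (2 : ℝ) ≠ 1)]
            norm_num
          rw [hg]
          have : (2 : ℝ) ^ (js + 1) = 2 * 2 ^ js := by ring
          nlinarith [pow_pos (by norm_num : (0:ℝ) < 2) js, sq_nonneg lam, hlam]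
      _ = 8 * (2 : ℝ) ^ (js : ℕ) * lam ^ 2 := by ring
  -- Part 2
  have hterm : ∀ j ∈ Finset.Ioc js J, ∑ k ∈ Finset.range (2 ^ j),
      β j k ^ 2 * (if |β j k| < 2 * lam then 1 else 0) ≤ M ^ 2 * r ^ j := by
    intro j hj
    simp only [Finset.mem_Ioc] at hj
    have hjlo : j₀ ≤ j := by omega
    have hbd : ∀ k ∈ Finset.range (2 ^ j),
        β j k ^ 2 * (if |β j k| < 2 * lam then 1 else 0) ≤
          M ^ 2 * ((2 : ℝ) ^ (-(j : ℝ) * (s + 1 / 2))) ^ 2 := by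
      intro k hk
      simp only [Finset.mem_range] at hk
      have h1 := hβ j hjlo hj.2 k hk
      have h2 : β j k ^ 2 * (if |β j k| < 2 * lam then 1 else 0) ≤ β j k ^ 2 := by
        by_cases h : |β j k| < 2 * lam
        · simp [h]
        · simp [h]; positivity
      have h3 : β j k ^ 2 ≤ (M * (2 : ℝ) ^ (-(j : ℝ) * (s + 1 / 2))) ^ 2 := by
        rw [← sq_abs (β j k)]
        exact pow_le_pow_left₀ (abs_nonneg _) h1 2
      calc β j k ^ 2 * (if |β j k| < 2 * lam then 1 else 0) ≤ β j k ^ 2 := h2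
        _ ≤ (M * (2 : ℝ) ^ (-(j : ℝ) * (s + 1 / 2))) ^ 2 := h3
        _ = M ^ 2 * ((2 : ℝ) ^ (-(j : ℝ) * (s + 1 / 2))) ^ 2 := by ring
    calc ∑ k ∈ Finset.range (2 ^ j), β j k ^ 2 * (if |β j k| < 2 * lam then 1 else 0)
        ≤ ∑ k ∈ Finset.range (2 ^ j),
            M ^ 2 * ((2 : ℝ) ^ (-(j : ℝ) * (s + 1 / 2))) ^ 2 := Finset.sum_le_sum hbd
      _ = (2 : ℝ) ^ j * (M ^ 2 * ((2 : ℝ) ^ (-(j : ℝ) * (s + 1 / 2))) ^ 2) := by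
          rw [Finset.sum_const, Finset.card_range, nsmul_eq_mul]
          push_cast
          ring
      _ = M ^ 2 * r ^ j := by
          have e1 : ((2 : ℝ) ^ (-(j : ℝ) * (s + 1 / 2))) ^ 2 =
              (2 : ℝ) ^ ((-(j : ℝ) * (s + 1 / 2)) * 2) := by
            rw [← Real.rpow_natCast ((2 : ℝ) ^ (-(j : ℝ) * (s + 1 / 2))) 2,
              ← Real.rpow_mul (by norm_num : (0:ℝ) ≤ 2)]
            norm_num
          have e2 : (2 : ℝ) ^ j = (2 : ℝ) ^ (j : ℝ) := by
            rw [Real.rpow_natCast]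
          have e3 : r ^ j = (2 : ℝ) ^ ((-(2 : ℝ) * s) * (j : ℝ)) := by
            rw [hr_def, ← Real.rpow_natCast ((2 : ℝ) ^ (-(2 : ℝ) * s)) j,
              ← Real.rpow_mul (by norm_num : (0:ℝ) ≤ 2)]
          rw [e1, e2, e3, mul_left_comm, ← Real.rpow_add (by norm_num : (0:ℝ) < 2)]
          congr 2
          ring
  have hgeom : ∑ j ∈ Finset.Ioc js J, r ^ j ≤ r ^ js := by
    have hIoc : Finset.Ioc js J = Finset.range (J + 1) \ Finset.range (js + 1) := by
      ext a
      simp only [Finset.mem_Ioc, Finset.mem_sdiff, Finset.mem_range]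
      omega
    rw [hIoc, Finset.sum_sdiff_eq_sub (by
      intro a ha
      simp only [Finset.mem_range] at ha ⊢
      omega)]
    rw [geom_sum_eq hr1.ne (J + 1), geom_sum_eq hr1.ne (js + 1), div_sub_div_same]
    rw [div_le_iff_of_neg (by linarith : r - 1 < 0)]
    have hp1 : (0 : ℝ) ≤ r ^ (J + 1) := by positivity
    have hp2 : r ^ (js + 1) = r * r ^ js := by rw [pow_succ]; ring
    have hp3 : (0 : ℝ) ≤ r ^ js := by positivity
    nlinarith [hp1, hp3, hr_half, hr0]
  have h2 : ∑ j ∈ Finset.Ioc js J, ∑ k ∈ Finset.range (2 ^ j),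
      β j k ^ 2 * (if |β j k| < 2 * lam then 1 else 0) ≤
      2 * M ^ 2 * (2 : ℝ) ^ (-(2 : ℝ) * (js : ℝ) * s) := by
    have hrjs : r ^ js = (2 : ℝ) ^ (-(2 : ℝ) * (js : ℝ) * s) := by
      rw [hr_def, ← Real.rpow_natCast ((2 : ℝ) ^ (-(2 : ℝ) * s)) js,
        ← Real.rpow_mul (by norm_num : (0:ℝ) ≤ 2)]
      congr 1
      ring
    calc ∑ j ∈ Finset.Ioc js J, ∑ k ∈ Finset.range (2 ^ j),
          β j k ^ 2 * (if |β j k| < 2 * lam then 1 else 0)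
        ≤ ∑ j ∈ Finset.Ioc js J, M ^ 2 * r ^ j := Finset.sum_le_sum hterm
      _ = M ^ 2 * ∑ j ∈ Finset.Ioc js J, r ^ j := by rw [Finset.mul_sum]
      _ ≤ M ^ 2 * r ^ js := by
          apply mul_le_mul_of_nonneg_left hgeom (by positivity)
      _ ≤ 2 * M ^ 2 * (2 : ℝ) ^ (-(2 : ℝ) * (js : ℝ) * s) := by
          rw [hrjs]
          nlinarith [Real.rpow_pos_of_pos (by norm_num : (0:ℝ) < 2) (-(2 : ℝ) * (js : ℝ) * s), sq_nonneg M]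
  linarith [h1, h2]
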